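/- arXiv:2012.07409 — 4 statements merged into one kernel-verified Lean document; each statement's English description precedes it below -/
import Mathlib

section
/- Let p(z) = 1 + a z^k with a ≠ 0 and k ≥ 1. Then the maximum modulus set of p, minus the origin, is the union over j ∈ {0,…,k−1} of the open rays {z ∈ ℂ \ {0} : arg z ≡ (2jπ − arg a)/k mod 2π}, and in particular it has exactly k connected components intersected with any punctured disc around 0. -/
def maxModSet (h : ℂ → ℂ) : Set ℂ :=
  {z : ℂ | ∀ w : ℂ, ‖w‖ = ‖z‖ → ‖h w‖ ≤ ‖h z‖}

open Complex Set


noncomputable def theta (a : ℂ) (k : ℕ) (j : ℕ) : ℝ := (2 * j * Real.pi - Complex.arg a) / k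

noncomputable def edir (a : ℂ) (k : ℕ) (j : ℕ) : ℂ := Complex.exp ((theta a k j : ℝ) * Complex.I)

-- C1: a * (t * e_j)^k = |a| * t^k
lemma keycalc (a : ℂ) (ha : a ≠ 0) (k : ℕ) (hk : 1 ≤ k) (j : ℕ) (t : ℝ) :
    a * ((t : ℂ) * edir a k j) ^ k = ((‖a‖ : ℝ) : ℂ) * (t:ℂ) ^ k := by
  have hk0 : (k : ℝ) ≠ 0 := Nat.cast_ne_zero.mpr (by omega)
  have h1 : (edir a k j) ^ k = Complex.exp ((((2 * j * Real.pi - Complex.arg a) : ℝ)) * Complex.I) := by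
    rw [edir, ← Complex.exp_nat_mul]
    congr 1
    have hkc : (k:ℂ) ≠ 0 := Nat.cast_ne_zero.mpr (by omega)
    push_cast [theta]
    field_simp
  have h2 : Complex.exp ((((2 * j * Real.pi - Complex.arg a) : ℝ)) * Complex.I)
      = Complex.exp (-(Complex.arg a) * Complex.I) := by
    push_cast
    rw [sub_mul, Complex.exp_sub]
    rw [show ((2:ℂ) * j * Real.pi * Complex.I) = (j : ℤ) * (2 * Real.pi * Complex.I) by push_cast; ring]
    rw [Complex.exp_int_mul_two_pi_mul_I]
    rw [neg_mul]
    rw [Complex.exp_neg, one_div]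
  have h3 : a * Complex.exp (-(Complex.arg a) * Complex.I) = ((‖a‖ : ℝ) : ℂ) := by
    conv_lhs => rw [← Complex.norm_mul_exp_arg_mul_I a]
    rw [mul_assoc, ← Complex.exp_add]
    simp
  rw [mul_pow, h1, h2]
  rw [show a * ((t:ℂ)^k * cexp (-(a.arg:ℂ) * I)) = a * cexp (-(a.arg:ℂ) * I) * (t:ℂ)^k by ring, h3]

lemma exp_I_eq_iff (x y : ℝ) :
    Complex.exp ((x:ℂ) * Complex.I) = Complex.exp ((y:ℂ) * Complex.I) ↔
      ∃ m : ℤ, x = y + 2 * Real.pi * m := by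
  rw [Complex.exp_eq_exp_iff_exists_int]
  constructor
  · rintro ⟨n, hn⟩
    refine ⟨n, ?_⟩
    have : ((x : ℂ)) * Complex.I = ((y + 2 * Real.pi * n : ℝ) : ℂ) * Complex.I := by
      push_cast; rw [hn]; ring
    have := mul_right_cancel₀ Complex.I_ne_zero this
    exact_mod_cast this
  · rintro ⟨m, hm⟩
    exact ⟨m, by rw [hm]; push_cast; ring⟩

lemma abs_edir (a : ℂ) (k : ℕ) (j : ℕ) : ‖(edir a k j)‖ = 1 := by
  rw [edir]; exact Complex.norm_exp_ofReal_mul_I _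

lemma ray_iff (a : ℂ) (k : ℕ) (j : ℕ) (z : ℂ) :
    (z ≠ 0 ∧ ∃ m : ℤ, Complex.arg z = theta a k j + 2 * Real.pi * m) ↔
      ∃ t : ℝ, 0 < t ∧ z = (t : ℂ) * edir a k j := by
  constructor
  · rintro ⟨hz, m, hm⟩
    refine ⟨‖z‖, norm_pos_iff.mpr hz, ?_⟩
    conv_lhs => rw [← Complex.norm_mul_exp_arg_mul_I z]
    congr 1
    rw [edir, exp_I_eq_iff]
    exact ⟨m, hm⟩
  · rintro ⟨t, ht, rfl⟩
    have hz : (t : ℂ) * edir a k j ≠ 0 := by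
      apply mul_ne_zero
      · exact_mod_cast ht.ne'
      · rw [edir]; exact Complex.exp_ne_zero _
    refine ⟨hz, ?_⟩
    have habs : ‖((t:ℂ) * edir a k j)‖ = t := by
      rw [norm_mul, abs_edir, mul_one, Complex.norm_real, Real.norm_eq_abs, abs_of_pos ht]
    have h1 : Complex.exp ((Complex.arg ((t:ℂ) * edir a k j) : ℂ) * Complex.I)
        = Complex.exp ((theta a k j : ℂ) * Complex.I) := by
      have ht' : (t : ℂ) ≠ 0 := by exact_mod_cast ht.ne'
      have h0 := Complex.norm_mul_exp_arg_mul_I ((t:ℂ) * edir a k j)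
      rw [habs] at h0
      rw [mul_left_cancel₀ ht' h0, edir]
    rw [exp_I_eq_iff] at h1
    exact h1

lemma arg_extract (a : ℂ) (ha : a ≠ 0) (k : ℕ) (hk : 1 ≤ k) (z : ℂ) (hz : z ≠ 0)
    (h : a * z ^ k = ((‖a‖ * ‖z‖ ^ k : ℝ) : ℂ)) :
    ∃ j, j < k ∧ ∃ m : ℤ, Complex.arg z = theta a k j + 2 * Real.pi * m := by
  have hr : (0:ℝ) < ‖z‖ := norm_pos_iff.mpr hz
  have hA : (0:ℝ) < ‖a‖ := norm_pos_iff.mpr ha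
  set α := Complex.arg z with hα
  set β := Complex.arg a with hβ
  have hz' : z = (‖z‖ : ℂ) * Complex.exp ((α:ℂ) * Complex.I) :=
    (Complex.norm_mul_exp_arg_mul_I z).symm
  have ha' : a = (‖a‖ : ℂ) * Complex.exp ((β:ℂ) * Complex.I) :=
    (Complex.norm_mul_exp_arg_mul_I a).symm
  have hc : ((‖a‖ * ‖z‖ ^ k : ℝ) : ℂ) ≠ 0 := by
    simp only [ne_eq, Complex.ofReal_eq_zero]
    positivity
  have key : Complex.exp (((β + k * α : ℝ) : ℂ) * Complex.I) = 1 := by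
    have heq : a * z ^ k = ((‖a‖ * ‖z‖ ^ k : ℝ) : ℂ) *
        Complex.exp (((β + k * α : ℝ) : ℂ) * Complex.I) := by
      conv_lhs => rw [ha', hz']
      rw [mul_pow, ← Complex.exp_nat_mul]
      push_cast
      rw [show ((β:ℂ) + (k:ℂ) * (α:ℂ)) * Complex.I
          = (β:ℂ) * Complex.I + (k:ℂ) * ((α:ℂ) * Complex.I) by ring, Complex.exp_add]
      ring
    rw [heq] at h
    exact mul_left_cancel₀ hc (h.trans (mul_one _).symm)
  rw [Complex.exp_eq_one_iff] at key
  obtain ⟨n, hn⟩ := key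
  have hn' : (β + k * α : ℝ) = 2 * Real.pi * n := by
    have hI : ((β + k * α : ℝ) : ℂ) * Complex.I = ((2 * Real.pi * n : ℝ) : ℂ) * Complex.I := by
      rw [hn]; push_cast; ring
    exact_mod_cast mul_right_cancel₀ Complex.I_ne_zero hI
  have hk0 : (0:ℤ) < (k:ℤ) := by exact_mod_cast hk
  refine ⟨(n % k).toNat, ?_, n / k, ?_⟩
  · have h1 : n % (k:ℤ) < k := Int.emod_lt_of_pos n hk0
    omega
  · have h2 : (0:ℤ) ≤ n % k := Int.emod_nonneg n (by omega)
    have h3 : (((n % (k:ℤ)).toNat : ℕ) : ℝ) = ((n % (k:ℤ) : ℤ) : ℝ) := by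
      exact_mod_cast congrArg (Int.cast : ℤ → ℝ) (Int.toNat_of_nonneg h2)
    have h4 : ((n:ℝ)) = ((n % (k:ℤ) : ℤ) : ℝ) + (k:ℝ) * ((n / (k:ℤ) : ℤ) : ℝ) := by
      have h5 := Int.emod_add_mul_ediv n k
      have h6 : ((n % (k:ℤ) + (k:ℤ) * (n / (k:ℤ)) : ℤ) : ℝ) = ((n : ℤ) : ℝ) := by
        rw [h5]
      push_cast at h6
      linarith
    have hkR : (0:ℝ) < (k:ℝ) := by positivity
    have h7 : (k:ℝ) * α = 2 * ((n % (k:ℤ) : ℤ) : ℝ) * Real.pi - β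
        + (k:ℝ) * (2 * Real.pi * ((n / (k:ℤ) : ℤ) : ℝ)) := by
      have h8 : 2 * Real.pi * (n:ℝ) = 2 * Real.pi * ((n % (k:ℤ) : ℤ) : ℝ)
          + 2 * Real.pi * ((k:ℝ) * ((n / (k:ℤ) : ℤ) : ℝ)) := by rw [h4]; ring
      linarith [hn']
    rw [theta, h3]
    field_simp
    linarith [h7]

lemma maxmod_iff (a : ℂ) (ha : a ≠ 0) (k : ℕ) (hk : 1 ≤ k) (p : ℂ → ℂ)
    (hp : ∀ z : ℂ, p z = 1 + a * z ^ k) (z : ℂ) (hz : z ≠ 0) :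
    z ∈ maxModSet p ↔ a * z ^ k = ((‖a‖ * ‖z‖ ^ k : ℝ) : ℂ) := by
  constructor
  · intro hmem
    set w0 : ℂ := (‖z‖ : ℂ) * edir a k 0 with hw0
    have habsw0 : ‖w0‖ = ‖z‖ := by
      rw [hw0, norm_mul, abs_edir, mul_one, Complex.norm_real, Real.norm_eq_abs, _root_.abs_of_nonneg (norm_nonneg z)]
    have hcalc : a * w0 ^ k = ((‖a‖ * ‖z‖ ^ k : ℝ) : ℂ) := by
      rw [hw0, keycalc a ha k hk 0 (‖z‖)]
      push_cast
      ring
    have hle := hmem w0 habsw0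
    have hnonneg : (0:ℝ) ≤ ‖a‖ * ‖z‖ ^ k := by positivity
    have habspw0 : ‖(p w0)‖ = 1 + ‖a‖ * ‖z‖ ^ k := by
      rw [hp, hcalc]
      rw [show (1 : ℂ) + ((‖a‖ * ‖z‖ ^ k : ℝ) : ℂ)
          = ((1 + ‖a‖ * ‖z‖ ^ k : ℝ) : ℂ) by push_cast; ring]
      rw [Complex.norm_real, Real.norm_eq_abs, _root_.abs_of_nonneg (by linarith)]
    have htri : ‖(p z)‖ ≤ 1 + ‖a‖ * ‖z‖ ^ k := by
      rw [hp]
      calc ‖(1 + a * z ^ k)‖ ≤ ‖1‖ + ‖(a * z ^ k)‖ :=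
            norm_add_le _ _
        _ = 1 + ‖a‖ * ‖z‖ ^ k := by
            simp [norm_mul, norm_pow]
    have heq : ‖(1 + a * z ^ k)‖ = ‖(1:ℂ)‖ + ‖(a * z ^ k)‖ := by
      have h1 : ‖(p z)‖ = 1 + ‖a‖ * ‖z‖ ^ k :=
        le_antisymm htri (habspw0 ▸ hle)
      rw [hp] at h1
      rw [h1]
      simp [norm_mul, norm_pow]
    have hray : SameRay ℝ (1 : ℂ) (a * z ^ k) := by
      rw [sameRay_iff_norm_add]
      simpa using heq
    obtain ⟨r, hr0, hr⟩ := hray.exists_nonneg_left one_ne_zero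
    have hrval : a * z ^ k = (r : ℂ) := by
      rw [← hr]; simp [Complex.real_smul]
    have habsr : r = ‖a‖ * ‖z‖ ^ k := by
      have := congrArg (‖·‖) hrval
      rw [norm_mul, norm_pow, Complex.norm_real, Real.norm_eq_abs, _root_.abs_of_nonneg hr0] at this
      exact this.symm
    rw [hrval, habsr]
  · intro h w hw
    rw [hp, hp, h]
    have hnonneg : (0:ℝ) ≤ ‖a‖ * ‖z‖ ^ k := by positivity
    have h2 : ‖((1:ℂ) + ((‖a‖ * ‖z‖ ^ k : ℝ) : ℂ))‖
        = 1 + ‖a‖ * ‖z‖ ^ k := by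
      rw [show (1 : ℂ) + ((‖a‖ * ‖z‖ ^ k : ℝ) : ℂ)
          = ((1 + ‖a‖ * ‖z‖ ^ k : ℝ) : ℂ) by push_cast; ring]
      rw [Complex.norm_real, Real.norm_eq_abs, _root_.abs_of_nonneg (by linarith)]
    rw [h2]
    calc ‖(1 + a * w ^ k)‖ ≤ ‖1‖ + ‖(a * w ^ k)‖ :=
          norm_add_le _ _
      _ = 1 + ‖a‖ * ‖w‖ ^ k := by simp [norm_mul, norm_pow]
      _ = 1 + ‖a‖ * ‖z‖ ^ k := by rw [hw]

lemma part1 (a : ℂ) (ha : a ≠ 0) (k : ℕ) (hk : 1 ≤ k) (p : ℂ → ℂ)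
    (hp : ∀ z : ℂ, p z = 1 + a * z ^ k) :
    maxModSet p \ {0} =
      ⋃ j ∈ Finset.range k, {z : ℂ | z ≠ 0 ∧
        ∃ m : ℤ, Complex.arg z = (2 * j * Real.pi - Complex.arg a) / k + 2 * Real.pi * m} := by
  ext z
  simp only [mem_diff, mem_singleton_iff, mem_iUnion, Finset.mem_range, mem_setOf_eq,
    exists_prop]
  constructor
  · rintro ⟨hmem, hz⟩
    obtain ⟨j, hj, m, hm⟩ := arg_extract a ha k hk z hz ((maxmod_iff a ha k hk p hp z hz).mp hmem)
    exact ⟨j, hj, hz, m, by rw [hm, theta]⟩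
  · rintro ⟨j, hj, hz, m, hm⟩
    have hray : ∃ t : ℝ, 0 < t ∧ z = (t : ℂ) * edir a k j :=
      (ray_iff a k j z).mp ⟨hz, m, by rw [theta]; exact hm⟩
    obtain ⟨t, ht, rfl⟩ := hray
    refine ⟨?_, hz⟩
    rw [maxmod_iff a ha k hk p hp _ hz, keycalc a ha k hk j t]
    have habs : ‖((t:ℂ) * edir a k j)‖ = t := by
      rw [norm_mul, abs_edir, mul_one, Complex.norm_real, Real.norm_eq_abs, _root_.abs_of_pos ht]
    rw [habs]
    push_cast
    ring

lemma edir_inj (a : ℂ) (k : ℕ) (hk : 1 ≤ k) {j j' : ℕ} (hj : j < k) (hj' : j' < k)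
    (h : edir a k j = edir a k j') : j = j' := by
  rw [edir, edir, exp_I_eq_iff] at h
  obtain ⟨m, hm⟩ := h
  have hkR : (k:ℝ) ≠ 0 := Nat.cast_ne_zero.mpr (by omega)
  have e1 : (k:ℝ) * theta a k j = 2 * j * Real.pi - Complex.arg a := by
    rw [theta]; field_simp
  have e2 : (k:ℝ) * theta a k j' = 2 * j' * Real.pi - Complex.arg a := by
    rw [theta]; field_simp
  have h2 : 2 * (j:ℝ) * Real.pi - Complex.arg a
      = 2 * (j':ℝ) * Real.pi - Complex.arg a + 2 * Real.pi * m * k := by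
    rw [← e1, ← e2, hm]; ring
  have h4 : 2 * Real.pi * ((j:ℝ) - (j':ℝ) - (m:ℝ) * (k:ℝ)) = 0 := by linarith
  have h5 : (j:ℝ) - (j':ℝ) - (m:ℝ) * (k:ℝ) = 0 := by
    rcases mul_eq_zero.mp h4 with h | h
    · exact absurd h (by positivity)
    · exact h
  have h6 : (j:ℤ) - (j':ℤ) - m * k = 0 := by exact_mod_cast h5
  have hjZ : (j:ℤ) < k := by exact_mod_cast hj
  have hj'Z : (j':ℤ) < k := by exact_mod_cast hj'
  have hm0 : m = 0 := by
    by_contra hm0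
    have hcase : 1 ≤ m ∨ m ≤ -1 := by omega
    rcases hcase with hm1 | hm1
    · have : (k:ℤ) ≤ m * k := by nlinarith
      omega
    · have : m * k ≤ -(k:ℤ) := by nlinarith
      omega
  rw [hm0] at h6
  omega

lemma part2 (a : ℂ) (ha : a ≠ 0) (k : ℕ) (hk : 1 ≤ k) (p : ℂ → ℂ)
    (hp : ∀ z : ℂ, p z = 1 + a * z ^ k) (R : ℝ) (hR : 0 < R) :
    Set.ncard {s : Set ℂ | ∃ z ∈ (maxModSet p \ {0}) ∩ {w : ℂ | 0 < ‖w‖ ∧ ‖w‖ < R},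
        s = connectedComponentIn ((maxModSet p \ {0}) ∩ {w : ℂ | 0 < ‖w‖ ∧ ‖w‖ < R}) z} = k := by
  set S : Set ℂ := (maxModSet p \ {0}) ∩ {w : ℂ | 0 < ‖w‖ ∧ ‖w‖ < R} with hS
  set L : ℕ → Set ℂ := fun j => {z : ℂ | ∃ t : ℝ, 0 < t ∧ t < R ∧ z = (t : ℂ) * edir a k j} with hL
  -- S = union of L j
  have habsL : ∀ j, ∀ t : ℝ, 0 < t → ‖((t:ℂ) * edir a k j)‖ = t := by
    intro j t ht
    rw [norm_mul, abs_edir, mul_one, Complex.norm_real, Real.norm_eq_abs, _root_.abs_of_pos ht]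
  have hSL : S = ⋃ j ∈ Finset.range k, L j := by
    rw [hS, part1 a ha k hk p hp]
    ext z
    simp only [mem_inter_iff, mem_iUnion, Finset.mem_range, mem_setOf_eq, exists_prop, hL]
    constructor
    · rintro ⟨⟨j, hj, hzr⟩, h0, hRz⟩
      obtain ⟨t, ht, rfl⟩ := (ray_iff a k j z).mp (by
        obtain ⟨hz, m, hm⟩ := hzr
        exact ⟨hz, m, by rw [theta]; exact hm⟩)
      exact ⟨j, hj, t, ht, by rwa [habsL j t ht] at hRz, rfl⟩
    · rintro ⟨j, hj, t, ht, htR, rfl⟩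
      refine ⟨⟨j, hj, ?_⟩, ?_, ?_⟩
      · obtain ⟨hz, m, hm⟩ := (ray_iff a k j _).mpr ⟨t, ht, rfl⟩
        exact ⟨hz, m, by rw [theta] at hm; exact hm⟩
      · rw [habsL j t ht]; exact ht
      · rw [habsL j t ht]; exact htR
  -- L j ⊆ S for j < k
  have hLS : ∀ j < k, L j ⊆ S := by
    intro j hj
    rw [hSL]
    exact fun z hz => mem_biUnion (Finset.mem_range.mpr hj) hz
  -- L j preconnected
  have hLconn : ∀ j, IsPreconnected (L j) := by
    intro j
    have himg : L j = (fun t : ℝ => (t:ℂ) * edir a k j) '' Ioo 0 R := by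
      ext z
      simp only [hL, mem_setOf_eq, mem_image, mem_Ioo]
      constructor
      · rintro ⟨t, h1, h2, rfl⟩; exact ⟨t, ⟨h1, h2⟩, rfl⟩
      · rintro ⟨t, ⟨h1, h2⟩, rfl⟩; exact ⟨t, h1, h2, rfl⟩
    rw [himg]
    exact isPreconnected_Ioo.image _
      ((Complex.continuous_ofReal.mul continuous_const).continuousOn)
  -- the direction map
  set c : ℂ → ℂ := fun w => w / (‖w‖ : ℂ) with hc
  have hccont : ContinuousOn c {w : ℂ | w ≠ 0} := by
    apply ContinuousOn.div continuousOn_id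
      ((Complex.continuous_ofReal.comp continuous_norm).continuousOn)
    intro w hw
    simp only [Function.comp_apply, ne_eq, Complex.ofReal_eq_zero, norm_eq_zero]
    exact hw
  have hcL : ∀ j, ∀ z ∈ L j, c z = edir a k j := by
    rintro j z ⟨t, ht, htR, rfl⟩
    rw [hc]
    simp only
    rw [habsL j t ht]
    have ht' : (t:ℂ) ≠ 0 := by exact_mod_cast ht.ne'
    field_simp
  have hS0 : S ⊆ {w : ℂ | w ≠ 0} := by
    rintro w ⟨_, h0, _⟩
    simp only [mem_setOf_eq]
    intro hw0
    rw [hw0] at h0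
    simp at h0
  -- component of z ∈ L j is L j
  have hcomp : ∀ j < k, ∀ z ∈ L j, connectedComponentIn S z = L j := by
    intro j hj z hzL
    have hzS : z ∈ S := hLS j hj hzL
    apply Subset.antisymm
    · set C := connectedComponentIn S z with hC
      have hCS : C ⊆ S := connectedComponentIn_subset S z
      have hCconn : IsPreconnected C := isPreconnected_connectedComponentIn
      have himgconn : IsPreconnected (c '' C) :=
        hCconn.image c (hccont.mono (hCS.trans hS0))
      have himgfin : (c '' C).Finite := by
        apply Set.Finite.subset (Set.Finite.biUnion (Finset.range k).finite_toSet
          (fun j _ => Set.finite_singleton (edir a k j)))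
        rintro _ ⟨w, hwC, rfl⟩
        have hwS := hCS hwC
        rw [hSL] at hwS
        simp only [mem_iUnion, Finset.mem_range, exists_prop] at hwS
        obtain ⟨i, hi, hwL⟩ := hwS
        simp only [mem_iUnion, Finset.coe_range, mem_Iio, mem_singleton_iff, exists_prop]
        exact ⟨i, hi, hcL i w hwL⟩
      have hsub : (c '' C).Subsingleton := by
        by_contra hns
        rw [Set.not_subsingleton_iff] at hns
        exact (himgconn.infinite_of_nontrivial hns) himgfin
      intro w hwC
      have hzC : z ∈ C := mem_connectedComponentIn hzS
      have hcw : c w = c z := hsub ⟨w, hwC, rfl⟩ ⟨z, hzC, rfl⟩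
      have hwS := hCS hwC
      rw [hSL] at hwS
      simp only [mem_iUnion, Finset.mem_range, exists_prop] at hwS
      obtain ⟨i, hi, hwL⟩ := hwS
      have : edir a k i = edir a k j := by
        rw [← hcL i w hwL, hcw, hcL j z hzL]
      rwa [edir_inj a k hk hi hj this] at hwL
    · exact (hLconn j).subset_connectedComponentIn hzL (hLS j hj)
  -- witness points
  have hwit : ∀ j, ((R/2 : ℝ) : ℂ) * edir a k j ∈ L j :=
    fun j => ⟨R/2, by linarith, by linarith, rfl⟩
  -- the set of components
  have hset : {s : Set ℂ | ∃ z ∈ S, s = connectedComponentIn S z}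
      = L '' ((Finset.range k : Finset ℕ) : Set ℕ) := by
    ext s
    simp only [mem_setOf_eq, mem_image, Finset.coe_range, mem_Iio]
    constructor
    · rintro ⟨z, hzS, rfl⟩
      have hz' := hzS
      rw [hSL] at hz'
      simp only [mem_iUnion, Finset.mem_range, exists_prop] at hz'
      obtain ⟨j, hj, hzL⟩ := hz'
      exact ⟨j, hj, (hcomp j hj z hzL).symm⟩
    · rintro ⟨j, hj, rfl⟩
      exact ⟨((R/2 : ℝ) : ℂ) * edir a k j, hLS j hj (hwit j),
        (hcomp j hj _ (hwit j)).symm⟩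
  have hinj : Set.InjOn L ((Finset.range k : Finset ℕ) : Set ℕ) := by
    intro j hj j' hj' hLL
    simp only [Finset.coe_range, mem_Iio] at hj hj'
    have hw := hwit j
    rw [hLL] at hw
    obtain ⟨t, ht, htR, heq⟩ := hw
    have habs1 : (R/2 : ℝ) = t := by
      have := congrArg (‖·‖) heq
      rwa [habsL j (R/2) (by linarith), habsL j' t ht] at this
    have hR2 : ((R/2 : ℝ) : ℂ) ≠ 0 := by
      simp only [ne_eq, Complex.ofReal_eq_zero]
      linarith
    rw [← habs1] at heq
    exact edir_inj a k hk hj hj' (mul_left_cancel₀ hR2 heq)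
  rw [hset, Set.ncard_image_of_injOn hinj, Set.ncard_coe_finset, Finset.card_range]

theorem stmt4 (a : ℂ) (ha : a ≠ 0) (k : ℕ) (hk : 1 ≤ k) (p : ℂ → ℂ)
    (hp : ∀ z : ℂ, p z = 1 + a * z ^ k) :
    (maxModSet p \ {0} =
      ⋃ j ∈ Finset.range k, {z : ℂ | z ≠ 0 ∧
        ∃ m : ℤ, Complex.arg z = (2 * j * Real.pi - Complex.arg a) / k + 2 * Real.pi * m}) ∧
    ∀ R : ℝ, 0 < R →
      Set.ncard {s : Set ℂ | ∃ z ∈ (maxModSet p \ {0}) ∩ {w : ℂ | 0 < ‖w‖ ∧ ‖w‖ < R},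
        s = connectedComponentIn ((maxModSet p \ {0}) ∩ {w : ℂ | 0 < ‖w‖ ∧ ‖w‖ < R}) z} = k :=
  ⟨part1 a ha k hk p hp, fun R hR => part2 a ha k hk p hp R hR⟩
end

section
/- Let q(z) = 1 + z² + b z³ with Re(b) > 0. Then there exists r₀ > 0 and δ > 0 such that for all 0 < r ≤ r₀ and all θ with |θ| ≤ δ and θ ≠ 0 or θ = 0, one has |q(r e^{iθ})| > |q(r e^{i(π−θ)})|; that is, near the origin the maximum modulus of q on small circles is attained near the positive real axis rather than near the negative real axis. -/
open Complex

lemma key_aux (A b v : ℂ) :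
    Complex.normSq (A - (starRingEnd ℂ) b * v) =
      Complex.normSq (A + b * v) - 4 * b.re * (((starRingEnd ℂ) A * v).re) := by
  simp only [Complex.normSq_apply, Complex.sub_re, Complex.sub_im, Complex.add_re,
    Complex.add_im, Complex.mul_re, Complex.mul_im, Complex.conj_re, Complex.conj_im]
  ring

theorem stmt10 (b : ℂ) (hb : 0 < b.re) (q : ℂ → ℂ)
    (hq : ∀ z : ℂ, q z = 1 + z ^ 2 + b * z ^ 3) :
    ∃ r₀ > (0 : ℝ), ∃ δ > (0 : ℝ), ∀ r : ℝ, 0 < r → r ≤ r₀ → ∀ θ : ℝ, |θ| ≤ δ →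
      ‖q (r * Complex.exp ((Real.pi - θ) * Complex.I))‖ <
        ‖q (r * Complex.exp (θ * Complex.I))‖ := by
  refine ⟨1, one_pos, Real.pi / 6, by positivity, fun r hr hr1 θ hθ => ?_⟩
  obtain ⟨hθ1, hθ2⟩ := abs_le.mp hθ
  have hπ := Real.pi_pos
  set z : ℂ := r * Complex.exp (θ * Complex.I) with hzdef
  -- the second point is -conj z
  have hconjexp : (starRingEnd ℂ) (Complex.exp (θ * Complex.I)) = Complex.exp (-(θ * Complex.I)) := by
    rw [← Complex.exp_conj]
    congr 1
    simp [Complex.conj_ofReal]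
  have hz2 : (r : ℂ) * Complex.exp (((Real.pi : ℂ) - θ) * Complex.I) = -(starRingEnd ℂ) z := by
    rw [hzdef, map_mul, Complex.conj_ofReal, hconjexp, sub_mul, Complex.exp_sub,
      Complex.exp_pi_mul_I, Complex.exp_neg]
    field_simp
  -- rewrite LHS as abs of a conjugate-free expression
  have habs : ‖q ((r : ℂ) * Complex.exp (((Real.pi : ℂ) - θ) * Complex.I))‖
      = ‖1 + z ^ 2 - (starRingEnd ℂ) b * z ^ 3‖ := by
    rw [hq, hz2]
    have : (1 : ℂ) + (-(starRingEnd ℂ) z) ^ 2 + b * (-(starRingEnd ℂ) z) ^ 3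
        = (starRingEnd ℂ) (1 + z ^ 2 - (starRingEnd ℂ) b * z ^ 3) := by
      simp only [map_add, map_sub, map_mul, map_pow, map_one, Complex.conj_conj]
      ring
    rw [this, Complex.norm_conj]
  rw [habs, hq]
  rw [Complex.norm_def, Complex.norm_def]
  refine Real.sqrt_lt_sqrt (Complex.normSq_nonneg _) ?_
  have hkey := key_aux (1 + z ^ 2) b (z ^ 3)
  have hre : (((starRingEnd ℂ) (1 + z ^ 2)) * z ^ 3).re
      = r ^ 3 * Real.cos (3 * θ) + r ^ 5 * Real.cos θ := by
    have h1 : ((starRingEnd ℂ) (1 + z ^ 2)) * z ^ 3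
        = z ^ 3 + ((Complex.normSq (z ^ 2) : ℂ)) * z := by
      rw [map_add, map_one, add_mul, one_mul]
      congr 1
      rw [show z ^ 3 = z ^ 2 * z by ring, ← mul_assoc, Complex.normSq_eq_conj_mul_self]
    have hz3 : (z ^ 3).re = r ^ 3 * Real.cos (3 * θ) := by
      have : z ^ 3 = ((r ^ 3 : ℝ) : ℂ) * Complex.exp (((3 * θ : ℝ) : ℂ) * Complex.I) := by
        rw [hzdef, mul_pow, ← Complex.exp_nat_mul]
        push_cast
        ring_nf
      rw [this, Complex.re_ofReal_mul, Complex.exp_ofReal_mul_I_re]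
    have hnz : Complex.normSq (z ^ 2) = r ^ 4 := by
      rw [map_pow, hzdef, map_mul, Complex.normSq_ofReal]
      rw [Complex.normSq_eq_norm_sq, Complex.norm_exp_ofReal_mul_I]
      ring
    have hzre : z.re = r * Real.cos θ := by
      rw [hzdef, Complex.re_ofReal_mul, Complex.exp_ofReal_mul_I_re]
    rw [h1, Complex.add_re, hz3, Complex.re_ofReal_mul, hnz, hzre]
    ring
  rw [hkey, hre]
  have hc1 : 0 < Real.cos θ := by
    apply Real.cos_pos_of_mem_Ioo
    constructor <;> [linarith; linarith]
  have hc3 : 0 ≤ Real.cos (3 * θ) := by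
    apply Real.cos_nonneg_of_mem_Icc
    constructor <;> [linarith; linarith]
  have h3 : 0 < r ^ 3 := pow_pos hr 3
  have h5 : 0 < r ^ 5 := pow_pos hr 5
  nlinarith [mul_pos h5 hc1, mul_nonneg h3.le hc3]
end

section
/- Fix a ≠ 0, b ≠ 0, integers n > k ≥ 1, and define t_j = 2|b| cos(n ω_j + arg b) where ω_j = (2jπ − arg a)/k, for j, j' ∈ {0, …, k−1}. Then t_j = t_{j'} if and only if there exists an integer m such that either j' − j = m k / n, or (j' + j)π = (k/n)(mπ − arg b) + arg a. -/
theorem stmt14 (a b : ℂ) (ha : a ≠ 0) (hb : b ≠ 0) (n k : ℕ) (hk : 1 ≤ k) (hnk : k < n)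
    (j j' : ℕ) (hj : j < k) (hj' : j' < k) :
    2 * ‖b‖ * Real.cos (n * ((2 * j * Real.pi - Complex.arg a) / k) + Complex.arg b) =
      2 * ‖b‖ * Real.cos (n * ((2 * j' * Real.pi - Complex.arg a) / k) + Complex.arg b) ↔
    ∃ m : ℤ, ((j' : ℝ) - j = m * k / n ∨
      ((j' : ℝ) + j) * Real.pi = (k / n) * (m * Real.pi - Complex.arg b) + Complex.arg a) := by
  have hb0 : (2 : ℝ) * ‖b‖ ≠ 0 := by
    have := norm_ne_zero_iff.mpr hb
    positivity
  have hk0 : (k : ℝ) ≠ 0 := by positivity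
  have hn0 : (n : ℝ) ≠ 0 := by
    have : 0 < n := lt_of_le_of_lt (Nat.zero_le k) hnk
    positivity
  have hpi := Real.pi_ne_zero
  rw [mul_right_inj' hb0, Real.cos_eq_cos_iff]
  apply exists_congr
  intro m
  apply or_congr
  · constructor
    · intro h
      field_simp at h ⊢
      have h2 : ((j' : ℝ) - j) * n * (2 * Real.pi) = (m : ℝ) * k * (2 * Real.pi) := by
        linear_combination h
      linear_combination mul_right_cancel₀ (show (2 * Real.pi) ≠ 0 by positivity) h2
    · intro h
      field_simp at h ⊢
      linear_combination (2 * Real.pi) * h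
  · constructor
    · intro h
      field_simp at h ⊢
      linear_combination h / 2
    · intro h
      field_simp at h ⊢
      linear_combination 2 * h
end

section
/- Let μ_p and μ_{p̂} be positive integers with μ_p dividing μ_{p̂}, let k be a positive multiple of μ_{p̂} and n a positive multiple of μ_p such that μ_{p̂}/μ_p and n/μ_p are coprime. Suppose j, j' are integers with j' − j = B₀ k / μ_{p̂} for some integer B₀. Then there exists an integer m with j' − j = m k / n if and only if there exists an integer B₁ with j' − j = B₁ k / μ_p. -/
theorem stmt15 (μp μq k n : ℕ) (hμp : 0 < μp) (hμq : 0 < μq) (hk : 0 < k) (hn : 0 < n)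
    (hdvd : μp ∣ μq) (hkq : μq ∣ k) (hnp : μp ∣ n)
    (hcop : Nat.Coprime (μq / μp) (n / μp))
    (j j' : ℤ) (hB0 : ∃ B0 : ℤ, (j' : ℚ) - j = B0 * k / μq) :
    (∃ m : ℤ, (j' : ℚ) - j = m * k / n) ↔ (∃ B1 : ℤ, (j' : ℚ) - j = B1 * k / μp) := by
  obtain ⟨B0, hB0⟩ := hB0
  obtain ⟨b, hb⟩ := hdvd
  obtain ⟨a, ha⟩ := hnp
  have ha' : n / μp = a := by rw [ha]; exact Nat.mul_div_cancel_left a hμp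
  have hb' : μq / μp = b := by rw [hb]; exact Nat.mul_div_cancel_left b hμp
  rw [ha', hb'] at hcop
  have ha0 : 0 < a := by
    rcases Nat.eq_zero_or_pos a with h | h
    · simp [ha, h] at hn
    · exact h
  have hμpQ : (μp : ℚ) ≠ 0 := by exact_mod_cast hμp.ne'
  have hnQ : (n : ℚ) ≠ 0 := by exact_mod_cast hn.ne'
  have hμqQ : (μq : ℚ) ≠ 0 := by exact_mod_cast hμq.ne'
  have hkQ : (k : ℚ) ≠ 0 := by exact_mod_cast hk.ne'
  have haQ : (a : ℚ) ≠ 0 := by exact_mod_cast ha0.ne'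
  constructor
  · rintro ⟨m, hm⟩
    have hq : (m : ℚ) * μq = B0 * n := by
      have h := hB0.symm.trans hm
      field_simp at h
      have h2 : (B0 : ℚ) * n = m * μq := by
        apply mul_left_cancel₀ hkQ
        ring_nf
        ring_nf at h
        linear_combination (k : ℚ) * h
      linarith
    have hZ : m * ((μp : ℤ) * b) = B0 * ((μp : ℤ) * a) := by
      have := hq
      rw [hb, ha] at this
      exact_mod_cast this
    have hμpZ : (μp : ℤ) ≠ 0 := by exact_mod_cast hμp.ne'
    have hZ2 : m * b = B0 * (a : ℤ) := by
      apply mul_left_cancel₀ hμpZ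
      ring_nf
      ring_nf at hZ
      linarith
    have hdvdm : (a : ℤ) ∣ m := by
      have hcopZ : IsCoprime (a : ℤ) (b : ℤ) := by
        rw [Int.isCoprime_iff_gcd_eq_one]
        simpa [Int.gcd_natCast_natCast] using hcop.symm
      exact hcopZ.dvd_of_dvd_mul_right ⟨B0, by linarith⟩
    obtain ⟨t, ht⟩ := hdvdm
    refine ⟨t, ?_⟩
    rw [hm, ht, ha]
    push_cast
    field_simp
  · rintro ⟨B1, hB1⟩
    refine ⟨B1 * a, ?_⟩
    rw [hB1, ha]
    push_cast
    field_simp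
end
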